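/- arXiv:2512.24356 — 3 statements merged into one kernel-verified Lean document; each statement's English description precedes it below -/
import Mathlib

section
/- Let f be a probability density on ℝⁿ, r : ℝⁿ → (0,∞) a measurable function, α > 0, and suppose c := ∫_{ℝⁿ} r(w)^α f(w) dw satisfies 0 < c < ∞. Let V be a random vector in ℝⁿ with Lebesgue density w ↦ (1/c) · r(w)^α · f(w), and let P be an α-Pareto random variable independent of V. Then for every threshold u > 0, the pair (u · P / r(V), V) has joint Lebesgue density (x₀, w) ↦ 1{x₀ · r(w) > u} · α · u^α · x₀^{-α-1} · (1/c) · f(w) on (0,∞) × ℝⁿ. -/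
open MeasureTheory ProbabilityTheory
open scoped ENNReal

/-- If `V` has the `r^α`-tilted density `(1/c) r^α f` and `P` is an independent α-Pareto
variable, then for every `u > 0` the pair `(u·P/r(V), V)` has the stated joint density. -/
theorem stmt_3
    {Ω : Type*} [MeasurableSpace Ω] (μ : Measure Ω) [IsProbabilityMeasure μ]
    {n : ℕ} (f : (Fin n → ℝ) → ℝ) (hfm : Measurable f) (hf0 : ∀ x, 0 ≤ f x)
    (hf1 : ∫ x, f x = 1)
    (r : (Fin n → ℝ) → ℝ) (hrm : Measurable r) (hr0 : ∀ w, 0 < r w)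
    (α : ℝ) (hα : 0 < α)
    (c : ℝ) (hc : c = ∫ w, r w ^ α * f w) (hcpos : 0 < c)
    (hcint : Integrable (fun w => r w ^ α * f w))
    (V : Ω → (Fin n → ℝ)) (hVm : Measurable V)
    (hV : Measure.map V μ = volume.withDensity (fun w => ENNReal.ofReal (c⁻¹ * r w ^ α * f w)))
    (P : Ω → ℝ) (hPm : Measurable P)
    (hPlaw : Measure.map P μ
      = volume.withDensity (fun t => ENNReal.ofReal (if 1 < t then α * t ^ (-α - 1) else 0)))
    (hindep : IndepFun P V μ) :
    ∀ u : ℝ, 0 < u →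
      Measure.map (fun ω => (u * P ω / r (V ω), V ω)) μ
        = (volume : Measure (ℝ × (Fin n → ℝ))).withDensity
            (fun p => ENNReal.ofReal
              (if u < p.1 * r p.2 then α * u ^ α * p.1 ^ (-α - 1) * (c⁻¹ * f p.2) else 0)) := by
  intro u hu
  -- abbreviations
  set hPd : ℝ → ℝ≥0∞ := fun t => ENNReal.ofReal (if 1 < t then α * t ^ (-α - 1) else 0)
    with hPd_def
  set hVd : (Fin n → ℝ) → ℝ≥0∞ := fun w => ENNReal.ofReal (c⁻¹ * r w ^ α * f w) with hVd_def
  set g : ℝ × (Fin n → ℝ) → ℝ≥0∞ := fun p => ENNReal.ofReal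
      (if u < p.1 * r p.2 then α * u ^ α * p.1 ^ (-α - 1) * (c⁻¹ * f p.2) else 0) with hg_def
  set φ : ℝ × (Fin n → ℝ) → ℝ × (Fin n → ℝ) := fun p => (u * p.1 / r p.2, p.2) with hφ_def
  -- measurability facts
  have hPdm : Measurable hPd := by
    apply Measurable.ennreal_ofReal
    apply Measurable.ite (measurableSet_lt measurable_const measurable_id)
    · fun_prop
    · exact measurable_const
  have hVdm : Measurable hVd := by
    apply Measurable.ennreal_ofReal
    fun_prop
  have hgm : Measurable g := by
    apply Measurable.ennreal_ofReal
    apply Measurable.ite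
    · exact measurableSet_lt measurable_const (measurable_fst.mul (hrm.comp measurable_snd))
    · fun_prop
    · exact measurable_const
  have hφm : Measurable φ :=
    ((measurable_const.mul measurable_fst).div (hrm.comp measurable_snd)).prodMk
      measurable_snd
  -- the joint law of (P, V) is the product of the marginals
  have hjoint : Measure.map (fun ω => (P ω, V ω)) μ = (Measure.map P μ).prod (Measure.map V μ) :=
    (indepFun_iff_map_prod_eq_prod_map_map hPm.aemeasurable hVm.aemeasurable).mp hindep
  set νP : Measure ℝ := volume.withDensity hPd with hνP_def
  set νV : Measure (Fin n → ℝ) := volume.withDensity hVd with hνV_def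
  haveI : SigmaFinite νP := SigmaFinite.withDensity_ofReal _
  haveI : SigmaFinite νV := SigmaFinite.withDensity_ofReal _
  have hcomp : Measure.map (fun ω => (u * P ω / r (V ω), V ω)) μ
      = Measure.map φ (νP.prod νV) := by
    rw [← hPlaw, ← hV, ← hjoint,
      Measure.map_map hφm (hPm.prodMk hVm)]
    rfl
  rw [hcomp]
  ext A hA
  have hφA : MeasurableSet (φ ⁻¹' A) := hφm hA
  rw [Measure.map_apply hφm hA, withDensity_apply _ hA, Measure.prod_apply_symm hφA,
    Measure.volume_eq_prod, ← lintegral_indicator hA g,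
    lintegral_prod_symm _ (hgm.indicator hA).aemeasurable]
  -- expand the νV integral as a density integral
  rw [hνV_def, lintegral_withDensity_eq_lintegral_mul _ hVdm
    (measurable_measure_prodMk_right hφA)]
  refine lintegral_congr fun w => ?_
  -- per-w computation: change of variables t ↦ u t / r w
  have hrw : (0 : ℝ) < r w := hr0 w
  set a : ℝ := u / r w with ha_def
  set b : ℝ := r w / u with hb_def
  have ha : (0 : ℝ) < a := div_pos hu hrw
  have hb : (0 : ℝ) < b := div_pos hrw hu
  have hba : ∀ t : ℝ, b * (a * t) = t := fun t => by
    rw [ha_def, hb_def]; field_simp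
  have hat : ∀ t : ℝ, a * t = u * t / r w := fun t => by rw [ha_def]; ring
  set S' : Set ℝ := (fun x => (x, w)) ⁻¹' A with hS'_def
  have hS'm : MeasurableSet S' := (measurable_id.prodMk measurable_const) hA
  set F : ℝ → ℝ≥0∞ := S'.indicator (fun x => hPd (b * x)) with hF_def
  have hFm : Measurable F := (hPdm.comp (measurable_const_mul b)).indicator hS'm
  -- the slice measure as an integral
  have hslice : νP ((fun t => (t, w)) ⁻¹' (φ ⁻¹' A)) = ∫⁻ t, F (a * t) := by
    have hSm : MeasurableSet ((fun t => (t, w)) ⁻¹' (φ ⁻¹' A)) :=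
      (measurable_id.prodMk measurable_const) hφA
    rw [hνP_def, withDensity_apply _ hSm, ← lintegral_indicator hSm hPd]
    refine lintegral_congr fun t => ?_
    by_cases ht : (u * t / r w, w) ∈ A
    · have h1 : t ∈ (fun t => (t, w)) ⁻¹' (φ ⁻¹' A) := ht
      have h2 : a * t ∈ S' := by
        simp only [hS'_def, Set.mem_preimage, hat t]; exact ht
      rw [Set.indicator_of_mem h1, hF_def, Set.indicator_of_mem h2, hba t]
    · have h1 : t ∉ (fun t => (t, w)) ⁻¹' (φ ⁻¹' A) := ht
      have h2 : a * t ∉ S' := by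
        simp only [hS'_def, Set.mem_preimage, hat t]; exact ht
      rw [Set.indicator_of_notMem h1, hF_def, Set.indicator_of_notMem h2]
  -- change of variables
  have hsub : ∫⁻ t, F (a * t) = ENNReal.ofReal b * ∫⁻ x, F x := by
    have hmap := Real.map_volume_mul_left (ne_of_gt ha)
    calc ∫⁻ t, F (a * t) = ∫⁻ x, F x ∂(Measure.map (fun x => a * x) volume) :=
          (lintegral_map hFm (measurable_const_mul a)).symm
      _ = ENNReal.ofReal |a⁻¹| * ∫⁻ x, F x := by rw [hmap, lintegral_smul_measure, smul_eq_mul]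
      _ = ENNReal.ofReal b * ∫⁻ x, F x := by
          congr 1
          rw [abs_of_pos (inv_pos.mpr ha), ha_def, inv_div, hb_def]
  -- put everything together pointwise
  have key : ∀ x : ℝ, hVd w * ENNReal.ofReal b * F x = A.indicator g (x, w) := by
    intro x
    by_cases hxA : (x, w) ∈ A
    · have hx' : x ∈ S' := hxA
      rw [Set.indicator_of_mem hxA, hF_def, Set.indicator_of_mem hx', hVd_def, hg_def]
      simp only
      have hdV0 : (0:ℝ) ≤ c⁻¹ * r w ^ α * f w :=
        mul_nonneg (mul_nonneg (inv_nonneg.mpr hcpos.le) (Real.rpow_nonneg (hr0 w).le α))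
          (hf0 w)
      rw [← ENNReal.ofReal_mul hdV0, ← ENNReal.ofReal_mul (mul_nonneg hdV0 hb.le)]
      congr 1
      have hcond : (1 < b * x) ↔ (u < x * r w) := by
        rw [hb_def, show r w / u * x = x * r w / u by ring, one_lt_div hu]
      by_cases hcase : u < x * r w
      · rw [if_pos (hcond.mpr hcase), if_pos hcase]
        have hx : (0 : ℝ) < x := by
          by_contra hxn
          push_neg at hxn
          have : x * r w ≤ 0 := mul_nonpos_of_nonpos_of_nonneg hxn hrw.le
          linarith
        have hbx : b * x = r w / u * x := by rw [hb_def]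
        have h1 : (b * x) ^ (-α - 1) = (r w / u) ^ (-α - 1) * x ^ (-α - 1) := by
          rw [hbx, Real.mul_rpow (div_pos hrw hu).le hx.le]
        have h2 : r w / u * (r w / u) ^ (-α - 1) = u ^ α / r w ^ α := by
          rw [show (-α - 1 : ℝ) = -α + -1 by ring, Real.rpow_add (div_pos hrw hu),
            Real.rpow_neg_one, Real.rpow_neg (div_pos hrw hu).le,
            Real.div_rpow hrw.le hu.le]
          field_simp
        have hrα : (0 : ℝ) < r w ^ α := Real.rpow_pos_of_pos hrw α
        have h3 : r w ^ α * (r w / u * (r w / u) ^ (-α - 1)) = u ^ α := by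
          rw [h2]; field_simp
        rw [h1, hb_def]
        linear_combination (c⁻¹ * f w * α * x ^ (-α - 1)) * h3
      · rw [if_neg (fun h => hcase (hcond.mp h)), if_neg hcase]
        ring
    · have hx' : x ∉ S' := hxA
      rw [Set.indicator_of_notMem hxA, hF_def, Set.indicator_of_notMem hx', mul_zero]
  calc (hVd * fun w => νP ((fun t => (t, w)) ⁻¹' (φ ⁻¹' A))) w
      = hVd w * (ENNReal.ofReal b * ∫⁻ x, F x) := by
        simp only [Pi.mul_apply]; rw [hslice, hsub]
    _ = ∫⁻ x, hVd w * ENNReal.ofReal b * F x := by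
        rw [← mul_assoc, lintegral_const_mul _ hFm]
    _ = ∫⁻ x, A.indicator g (x, w) := lintegral_congr key
end

section
/- Let (E, 𝓔, λ) be a measure space with λ σ-finite, p : E → [0,∞) a probability density with respect to λ, q : E × E → [0,∞) a measurable function such that ∫ q(x, y) λ(dy) = 1 for every x ∈ E, and let a(x, y) := min{ (p(y)·q(y,x)) / (p(x)·q(x,y)), 1 } whenever p(x)·q(x,y) > 0 and a(x,y) := 1 otherwise. Define the Metropolis–Hastings transition kernel K(x, A) := ∫_A q(x,y) a(x,y) λ(dy) + 1{x ∈ A} · (1 − ∫_E q(x,y) a(x,y) λ(dy)). Then K is a Markov kernel and the probability measure π(A) := ∫_A p dλ is invariant for K, i.e., ∫_E K(x, A) p(x) λ(dx) = π(A) for every A ∈ 𝓔. -/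
open MeasureTheory ENNReal

/-- `a` takes values in `[0,1]`. -/
lemma mh_a_mem {E : Type*} (p : E → ℝ) (hp0 : ∀ x, 0 ≤ p x)
    (q : E → E → ℝ) (hq0 : ∀ x y, 0 ≤ q x y) (a : E → E → ℝ)
    (ha : ∀ x y, a x y = if 0 < p x * q x y then min (p y * q y x / (p x * q x y)) 1 else 1)
    (x y : E) : 0 ≤ a x y ∧ a x y ≤ 1 := by
  rw [ha]
  split_ifs with h
  · exact ⟨le_min (div_nonneg (mul_nonneg (hp0 y) (hq0 y x)) h.le) zero_le_one, min_le_right _ _⟩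
  · exact ⟨zero_le_one, le_refl 1⟩

/-- Detailed balance. -/
lemma mh_db {E : Type*} (p : E → ℝ) (hp0 : ∀ x, 0 ≤ p x)
    (q : E → E → ℝ) (hq0 : ∀ x y, 0 ≤ q x y) (a : E → E → ℝ)
    (ha : ∀ x y, a x y = if 0 < p x * q x y then min (p y * q y x / (p x * q x y)) 1 else 1)
    (x y : E) : p x * (q x y * a x y) = p y * (q y x * a y x) := by
  have hA : 0 ≤ p x * q x y := mul_nonneg (hp0 x) (hq0 x y)
  have hB : 0 ≤ p y * q y x := mul_nonneg (hp0 y) (hq0 y x)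
  rw [ha x y, ha y x]
  rcases lt_or_eq_of_le hA with hA' | hA' <;> rcases lt_or_eq_of_le hB with hB' | hB'
  · rw [if_pos hA', if_pos hB', ← mul_assoc, ← mul_assoc,
      mul_min_of_nonneg _ _ hA'.le, mul_min_of_nonneg _ _ hB'.le]
    have e1 : p x * q x y * (p y * q y x / (p x * q x y)) = p y * q y x := by
      rw [mul_div_assoc', mul_comm, mul_div_assoc, div_self hA'.ne', mul_one]
    have e2 : p y * q y x * (p x * q x y / (p y * q y x)) = p x * q x y := by
      rw [mul_div_assoc', mul_comm, mul_div_assoc, div_self hB'.ne', mul_one]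
    rw [e1, e2, mul_one, mul_one, min_comm]
  · rw [if_pos hA', if_neg (by simp [← hB'])]
    simp [hB'.symm, zero_div, ← mul_assoc, min_eq_left zero_le_one]
  · rw [if_neg (by simp [← hA']), if_pos hB']
    simp [hA'.symm, zero_div, ← mul_assoc, min_eq_left zero_le_one]
  · rw [if_neg (by simp [← hA']), if_neg (by simp [← hB'])]
    simp [← mul_assoc, hA'.symm, hB'.symm]

/-- The Metropolis–Hastings transition kernel is a Markov kernel and leaves the
target distribution `π(A) = ∫_A p dλ` invariant. -/
theorem stmt_8
    {E : Type*} [MeasurableSpace E] (lam : Measure E) [SigmaFinite lam]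
    (p : E → ℝ) (hpm : Measurable p) (hp0 : ∀ x, 0 ≤ p x)
    (hp1 : ∫⁻ x, ENNReal.ofReal (p x) ∂lam = 1)
    (q : E → E → ℝ) (hqm : Measurable (Function.uncurry q)) (hq0 : ∀ x y, 0 ≤ q x y)
    (hq1 : ∀ x, ∫⁻ y, ENNReal.ofReal (q x y) ∂lam = 1)
    (a : E → E → ℝ)
    (ha : ∀ x y, a x y = if 0 < p x * q x y then min (p y * q y x / (p x * q x y)) 1 else 1)
    (K : E → Measure E)
    (hK : ∀ x, K x = lam.withDensity (fun y => ENNReal.ofReal (q x y * a x y))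
        + (1 - ∫⁻ y, ENNReal.ofReal (q x y * a x y) ∂lam) • Measure.dirac x) :
    (∀ x, IsProbabilityMeasure (K x)) ∧
      (∀ A : Set E, MeasurableSet A → Measurable (fun x => K x A)) ∧
      (∀ A : Set E, MeasurableSet A →
        ∫⁻ x, K x A * ENNReal.ofReal (p x) ∂lam = ∫⁻ x in A, ENNReal.ofReal (p x) ∂lam) := by
  -- abbreviations
  set f : E → E → ℝ≥0∞ := fun x y => ENNReal.ofReal (q x y * a x y) with hf
  set P : E → ℝ≥0∞ := fun x => ENNReal.ofReal (p x) with hP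
  have hPm : Measurable P := hpm.ennreal_ofReal
  set r : E → ℝ≥0∞ := fun x => ∫⁻ y, f x y ∂lam with hr
  -- measurability of a
  have ham : Measurable (Function.uncurry a) := by
    have : Function.uncurry a = fun z : E × E =>
        if 0 < p z.1 * q z.1 z.2 then min (p z.2 * q z.2 z.1 / (p z.1 * q z.1 z.2)) 1 else 1 :=
      funext fun z => ha z.1 z.2
    rw [this]
    apply Measurable.ite
    · exact measurableSet_lt measurable_const ((hpm.comp measurable_fst).mul hqm)
    · exact (((hpm.comp measurable_snd).mul (hqm.comp measurable_swap)).div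
        ((hpm.comp measurable_fst).mul hqm)).min measurable_const
    · exact measurable_const
  have hfm : Measurable (fun z : E × E => f z.1 z.2) :=
    ENNReal.measurable_ofReal.comp (hqm.mul ham)
  have hfm1 : ∀ x, Measurable (f x) := fun x =>
    hfm.comp (measurable_prodMk_left)
  -- r ≤ 1
  have hfle : ∀ x y, f x y ≤ ENNReal.ofReal (q x y) := fun x y =>
    ENNReal.ofReal_le_ofReal (by
      have := (mh_a_mem p hp0 q hq0 a ha x y).2
      nlinarith [hq0 x y])
  have hrle : ∀ x, r x ≤ 1 := fun x => by
    calc r x ≤ ∫⁻ y, ENNReal.ofReal (q x y) ∂lam := lintegral_mono (hfle x)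
    _ = 1 := hq1 x
  have hrm : Measurable r := Measurable.lintegral_prod_right' hfm
  -- K applied to a measurable set
  have hKA : ∀ (x : E) (A : Set E), MeasurableSet A →
      K x A = (∫⁻ y in A, f x y ∂lam) + (1 - r x) * A.indicator 1 x := by
    intro x A hA
    rw [hK x]
    simp [Measure.add_apply, withDensity_apply _ hA, Measure.smul_apply,
      Measure.dirac_apply' _ hA, smul_eq_mul]
    rfl
  refine ⟨?_, ?_, ?_⟩
  · intro x
    constructor
    rw [hKA x Set.univ MeasurableSet.univ]
    simp only [Measure.restrict_univ, Set.indicator_univ, Pi.one_apply, mul_one]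
    exact add_tsub_cancel_of_le (hrle x)
  · intro A hA
    have : (fun x => K x A) =
        fun x => (∫⁻ y in A, f x y ∂lam) + (1 - r x) * A.indicator 1 x := by
      funext x; exact hKA x A hA
    rw [this]
    apply Measurable.add
    · exact Measurable.lintegral_prod_right' hfm
    · exact ((measurable_const.sub hrm).mul (measurable_one.indicator hA))
  · intro A hA
    have key : ∀ x, K x A * P x =
        (∫⁻ y in A, P x * f x y ∂lam) + A.indicator (fun x => (1 - r x) * P x) x := by
      intro x
      rw [hKA x A hA, add_mul, lintegral_const_mul _ (hfm1 x)]
      congr 1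
      · rw [mul_comm]
      · by_cases hx : x ∈ A <;> simp [hx, mul_comm]
    calc ∫⁻ x, K x A * P x ∂lam
        = ∫⁻ x, ((∫⁻ y in A, P x * f x y ∂lam) + A.indicator (fun x => (1 - r x) * P x) x) ∂lam := by
          exact lintegral_congr key
      _ = (∫⁻ x, ∫⁻ y in A, P x * f x y ∂lam ∂lam) + ∫⁻ x in A, (1 - r x) * P x ∂lam := by
          rw [lintegral_add_right _ ((show Measurable (fun x => (1 - r x) * P x) from (measurable_const.sub hrm).mul
            (hPm)).indicator hA), lintegral_indicator hA _]
      _ = (∫⁻ y in A, ∫⁻ x, P x * f x y ∂lam ∂lam) + ∫⁻ x in A, (1 - r x) * P x ∂lam := by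
          congr 1
          exact lintegral_lintegral_swap
            ((((hpm.comp measurable_fst).ennreal_ofReal).mul hfm).aemeasurable)
      _ = (∫⁻ y in A, P y * r y ∂lam) + ∫⁻ y in A, (1 - r y) * P y ∂lam := by
          congr 1
          apply lintegral_congr
          intro y
          have : ∀ x, P x * f x y = P y * f y x := by
            intro x
            rw [hP, hf]
            simp only
            rw [← ENNReal.ofReal_mul (hp0 x), ← ENNReal.ofReal_mul (hp0 y)]
            exact congrArg _ (mh_db p hp0 q hq0 a ha x y)
          rw [lintegral_congr this, lintegral_const_mul _ (hfm1 y)]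
      _ = ∫⁻ y in A, P y ∂lam := by
          rw [← lintegral_add_right _ (show Measurable (fun x => (1 - r x) * P x) from (measurable_const.sub hrm).mul hPm)]
          apply lintegral_congr
          intro y
          rw [mul_comm (1 - r y) (P y), ← mul_add, add_tsub_cancel_of_le (hrle y), mul_one]
end

section
/- Let α > 0, let r : ℝⁿ → [0,∞) be positively homogeneous of degree 1 (r(t·w) = t·r(w) for all t ≥ 0, w ∈ ℝⁿ), let Θ be a random vector in ℝⁿ with r(Θ) = 1 almost surely, let P be an α-Pareto random variable independent of Θ, and set X := P · Θ. Then X is threshold-stable: for every u ≥ 1 and every measurable set A ⊆ ℝⁿ, ℙ( X/u ∈ A | r(X) > u ) = ℙ( X ∈ A ). In other words, conditionally on an r-exceedance of the level u, the rescaled process X/u has the same law as X. -/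
open MeasureTheory ProbabilityTheory

/-- Scaling property of the Pareto law: the restriction to `(u, ∞)` equals the
pushforward under multiplication by `u`, scaled by `u ^ (-α)`. -/
lemma pareto_restrict_scale (ν : Measure ℝ) [IsProbabilityMeasure ν] (α : ℝ) (hα : 0 < α)
    (hν : ∀ t : ℝ, 1 ≤ t → ν (Set.Ioi t) = ENNReal.ofReal (t ^ (-α)))
    (u : ℝ) (hu : 1 ≤ u) :
    ν.restrict (Set.Ioi u) = (ENNReal.ofReal (u ^ (-α))) • Measure.map (fun p => u * p) ν := by
  have hu0 : (0:ℝ) < u := lt_of_lt_of_le one_pos hu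
  have hmul : Measurable fun p : ℝ => u * p := measurable_const.mul measurable_id
  have hν' : ∀ t : ℝ, ν (Set.Ioi t) = ENNReal.ofReal ((max t 1) ^ (-α)) := by
    intro t
    rcases le_total 1 t with h | h
    · rw [max_eq_left h]; exact hν t h
    · rw [max_eq_right h]
      have h1 : ν (Set.Ioi (1:ℝ)) = 1 := by
        rw [hν 1 le_rfl]; simp
      have hle : ν (Set.Ioi (1:ℝ)) ≤ ν (Set.Ioi t) :=
        measure_mono (Set.Ioi_subset_Ioi h)
      have hone : ν (Set.Ioi t) = 1 := le_antisymm prob_le_one (h1 ▸ hle)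
      rw [hone]; simp
  refine MeasureTheory.ext_of_generate_finite _ (BorelSpace.measurable_eq.trans
    (borel_eq_generateFrom_Ioi ℝ)) isPiSystem_Ioi ?_ ?_
  · rintro s ⟨t, rfl⟩
    have hpre : (fun p : ℝ => u * p) ⁻¹' Set.Ioi t = Set.Ioi (t / u) := by
      ext p; simp [Set.mem_Ioi, div_lt_iff₀ hu0, mul_comm]
    have hmax : max (t / u) 1 * u = max t u := by
      rcases le_total t u with h | h
      · rw [max_eq_right (by rw [div_le_one hu0]; exact h), one_mul, max_eq_right h]
      · rw [max_eq_left (by rw [le_div_iff₀ hu0, one_mul]; exact h),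
          div_mul_cancel₀ _ hu0.ne', max_eq_left h]
    rw [Measure.restrict_apply measurableSet_Ioi, Set.Ioi_inter_Ioi,
      Measure.smul_apply, Measure.map_apply hmul measurableSet_Ioi, hpre, hν', hν',
      smul_eq_mul, ← ENNReal.ofReal_mul (Real.rpow_nonneg hu0.le _),
      ← Real.mul_rpow hu0.le (lt_of_lt_of_le zero_lt_one (le_max_right _ _)).le]
    congr 2
    rw [max_eq_left (hu.trans (le_max_right t u)), ← hmax, mul_comm]
  · rw [Measure.restrict_apply_univ]
    have : (Measure.map (fun p => u * p) ν) Set.univ = 1 := by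
      rw [Measure.map_apply hmul MeasurableSet.univ]; simp
    rw [Measure.smul_apply, this, smul_eq_mul, mul_one, hν u hu]

/-- Threshold stability of the r-Pareto vector `X = P • Θ`: conditionally on the
r-exceedance `r(X) > u` (for `u ≥ 1`), the rescaled vector `X/u` has the same law as `X`. -/
theorem stmt_14
    {Ω : Type*} [MeasurableSpace Ω] (μ : Measure Ω) [IsProbabilityMeasure μ]
    {n : ℕ} (α : ℝ) (hα : 0 < α)
    (r : (Fin n → ℝ) → ℝ) (hrm : Measurable r) (hr0 : ∀ w, 0 ≤ r w)
    (hhom : ∀ t : ℝ, 0 ≤ t → ∀ w, r (t • w) = t * r w)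
    (Θ : Ω → (Fin n → ℝ)) (hΘm : Measurable Θ) (hΘ : ∀ᵐ ω ∂μ, r (Θ ω) = 1)
    (P : Ω → ℝ) (hPm : Measurable P)
    (hP : ∀ t : ℝ, 1 ≤ t → μ {ω | t < P ω} = ENNReal.ofReal (t ^ (-α)))
    (hindep : IndepFun P Θ μ) :
    ∀ u : ℝ, 1 ≤ u → ∀ A : Set (Fin n → ℝ), MeasurableSet A →
      ProbabilityTheory.cond μ {ω | u < r (P ω • Θ ω)} {ω | u⁻¹ • (P ω • Θ ω) ∈ A}
        = μ {ω | P ω • Θ ω ∈ A} := by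
  intro u hu A hA
  have hu0 : (0:ℝ) < u := lt_of_lt_of_le one_pos hu
  -- laws
  set ν : Measure ℝ := μ.map P with hνdef
  set κ : Measure (Fin n → ℝ) := μ.map Θ with hκdef
  have hνprob : IsProbabilityMeasure ν := Measure.isProbabilityMeasure_map hPm.aemeasurable
  have hκprob : IsProbabilityMeasure κ := Measure.isProbabilityMeasure_map hΘm.aemeasurable
  have hν : ∀ t : ℝ, 1 ≤ t → ν (Set.Ioi t) = ENNReal.ofReal (t ^ (-α)) := by
    intro t ht
    rw [hνdef, Measure.map_apply hPm measurableSet_Ioi]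
    exact hP t ht
  -- P > 1 a.s.
  have hP1 : ∀ᵐ ω ∂μ, 1 < P ω := by
    have hms : MeasurableSet {ω | 1 < P ω} := measurableSet_lt measurable_const hPm
    have h1 : μ {ω | 1 < P ω} = 1 := by rw [hP 1 le_rfl]; simp
    have : μ {ω | 1 < P ω}ᶜ = 0 := by
      rw [measure_compl hms (measure_ne_top μ _), h1, measure_univ, tsub_self]
    exact (MeasureTheory.ae_iff).2 (by simpa [Set.compl_setOf] using this)
  -- measurability of X = P • Θ
  have hXm : Measurable fun ω => P ω • Θ ω :=
    measurable_pi_lambda _ fun i => by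
      simp only [Pi.smul_apply, smul_eq_mul]
      exact hPm.mul ((measurable_pi_apply i).comp hΘm)
  -- the exceedance event coincides a.e. with {u < P}
  have hSS' : {ω | u < r (P ω • Θ ω)} =ᵐ[μ] {ω | u < P ω} := by
    rw [Filter.eventuallyEq_set]
    filter_upwards [hΘ, hP1] with ω h1 h2
    have hr : r (P ω • Θ ω) = P ω := by
      rw [hhom (P ω) (le_of_lt (lt_trans zero_lt_one h2)), h1, mul_one]
    simp [Set.mem_setOf_eq, hr]
  have hSm : MeasurableSet {ω | u < r (P ω • Θ ω)} :=
    measurableSet_lt measurable_const (hrm.comp hXm)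
  -- joint law is the product of laws
  have hjoint : μ.map (fun ω => (P ω, Θ ω)) = ν.prod κ :=
    (indepFun_iff_map_prod_eq_prod_map_map hPm.aemeasurable hΘm.aemeasurable).mp hindep
  have hPΘm : Measurable fun ω => (P ω, Θ ω) := hPm.prodMk hΘm
  -- the two product-space events
  set E₁ : Set (ℝ × (Fin n → ℝ)) := {q | u < q.1 ∧ (u⁻¹ * q.1) • q.2 ∈ A} with hE₁def
  set E₂ : Set (ℝ × (Fin n → ℝ)) := {q | q.1 • q.2 ∈ A} with hE₂def
  have hsm2 : Measurable fun q : ℝ × (Fin n → ℝ) => q.1 • q.2 :=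
    measurable_pi_lambda _ fun i => by
      simp only [Pi.smul_apply, smul_eq_mul]
      exact measurable_fst.mul ((measurable_pi_apply i).comp measurable_snd)
  have hsm1 : Measurable fun q : ℝ × (Fin n → ℝ) => (u⁻¹ * q.1) • q.2 :=
    measurable_pi_lambda _ fun i => by
      simp only [Pi.smul_apply, smul_eq_mul]
      exact (measurable_const.mul measurable_fst).mul
        ((measurable_pi_apply i).comp measurable_snd)
  have hE₁ : MeasurableSet E₁ :=
    (measurableSet_lt measurable_const measurable_fst).inter (hsm1 hA)
  have hE₂ : MeasurableSet E₂ := hsm2 hA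
  -- express the two relevant μ-measures as product-measure integrals
  have hμ₁ : μ ({ω | u < P ω} ∩ {ω | u⁻¹ • (P ω • Θ ω) ∈ A})
      = (ν.prod κ) E₁ := by
    rw [← hjoint, Measure.map_apply hPΘm hE₁]
    congr 1
    ext ω
    simp [hE₁def, Set.mem_setOf_eq, smul_smul]
  have hμ₂ : μ {ω | P ω • Θ ω ∈ A} = (ν.prod κ) E₂ := by
    rw [← hjoint, Measure.map_apply hPΘm hE₂]
    rfl
  -- the slice-wise scaling identity
  have hslice : ∀ θ : Fin n → ℝ,
      ν {p : ℝ | u < p ∧ (u⁻¹ * p) • θ ∈ A}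
        = ENNReal.ofReal (u ^ (-α)) * ν {p : ℝ | p • θ ∈ A} := by
    intro θ
    have hBm : ∀ c : ℝ, MeasurableSet {p : ℝ | (c * p) • θ ∈ A} := by
      intro c
      have : Measurable fun p : ℝ => (c * p) • θ :=
        measurable_pi_lambda _ fun i => by
          simp only [Pi.smul_apply, smul_eq_mul]
          exact (measurable_id.const_mul c).mul measurable_const
      exact this hA
    have hmul : Measurable fun p : ℝ => u * p := measurable_id.const_mul u
    have h1 : {p : ℝ | u < p ∧ (u⁻¹ * p) • θ ∈ A}
        = {p : ℝ | (u⁻¹ * p) • θ ∈ A} ∩ Set.Ioi u := by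
      ext p; simp [Set.mem_setOf_eq, Set.mem_Ioi, and_comm]
    rw [h1, ← Measure.restrict_apply (hBm u⁻¹),
      pareto_restrict_scale ν α hα hν u hu, Measure.smul_apply, smul_eq_mul,
      Measure.map_apply hmul (hBm u⁻¹)]
    congr 2
    ext p
    simp [Set.mem_setOf_eq, inv_mul_cancel_left₀ hu0.ne']
  -- put things together with Fubini
  have hprod₁ : (ν.prod κ) E₁ = ENNReal.ofReal (u ^ (-α)) * (ν.prod κ) E₂ := by
    rw [Measure.prod_apply_symm hE₁, Measure.prod_apply_symm hE₂, ← lintegral_const_mul'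
      _ _ ENNReal.ofReal_ne_top]
    apply lintegral_congr
    intro θ
    simpa [hE₁def, hE₂def, Set.preimage_setOf_eq] using hslice θ
  -- final computation
  have hcpos : ENNReal.ofReal (u ^ (-α)) ≠ 0 :=
    (ENNReal.ofReal_pos.mpr (Real.rpow_pos_of_pos hu0 _)).ne'
  rw [ProbabilityTheory.cond_apply hSm, measure_congr hSS',
    measure_congr (hSS'.inter (Filter.EventuallyEq.refl (ae μ) ({ω | u⁻¹ • (P ω • Θ ω) ∈ A} : Set Ω))), hP u hu, hμ₁, hμ₂, hprod₁,
    ← mul_assoc, ENNReal.inv_mul_cancel hcpos ENNReal.ofReal_ne_top, one_mul]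
end
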